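/- Let C be a ribbon finite tensor category, I a tensor ideal with modified trace t, and let L^B_X be a closed C-coloured ribbon graph containing an embedded knot component coloured by B ∈ C and a distinct edge coloured by X ∈ I. Then for any short exact sequence 0 → A → B → C → 0 in C, the renormalised invariant satisfies F'_t(L^B_X) = F'_t(L^A_X) + F'_t(L^C_X). Consequently F'_t(L^B_X) depends on B only through its class in the Grothendieck group: F'_t(L^B_X) = Σ_{U simple} [B : U] · F'_t(L^U_X). -/

import Mathlib

open CategoryTheory CategoryTheory.Limits MonoidalCategory

universe v u

section Defs

variable (k : Type u) [Field k]
variable (C : Type u) [Category.{v} C] [Preadditive C] [Linear k C]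
  [MonoidalCategory C] [RightRigidCategory C]

/-- A pivotal structure, presented as the induced right duality data. -/
structure PivotalData where
  evR : ∀ X : C, X ⊗ Xᘁ ⟶ 𝟙_ C
  coevR : ∀ X : C, 𝟙_ C ⟶ Xᘁ ⊗ X
  zig : ∀ X : C,
    (ρ_ X).inv ≫ (X ◁ coevR X) ≫ (α_ X (Xᘁ) X).inv ≫ (evR X ▷ X) ≫ (λ_ X).hom = 𝟙 X
  zag : ∀ X : C,
    (λ_ (Xᘁ)).inv ≫ (coevR X ▷ (Xᘁ)) ≫ (α_ (Xᘁ) X (Xᘁ)).hom ≫ ((Xᘁ) ◁ evR X) ≫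
      (ρ_ (Xᘁ)).hom = 𝟙 (Xᘁ)
  evR_natural : ∀ {X Y : C} (f : X ⟶ Y), (f ▷ (Yᘁ)) ≫ evR Y = (X ◁ fᘁ) ≫ evR X

/-- A ribbon structure on a braided rigid monoidal category: a natural family
of twist automorphisms `θ_X` with `θ_{X⊗Y} = c_{Y,X} ∘ c_{X,Y} ∘ (θ_X ⊗ θ_Y)`
and `θ_{X^*} = (θ_X)^*`. -/
structure RibbonStructure [BraidedCategory C] where
  twist : ∀ X : C, X ≅ X
  naturality : ∀ {X Y : C} (f : X ⟶ Y), f ≫ (twist Y).hom = (twist X).hom ≫ f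
  twist_tensor : ∀ X Y : C,
    (twist (X ⊗ Y)).hom = (β_ X Y).hom ≫ (β_ Y X).hom ≫ ((twist X).hom ⊗ₘ (twist Y).hom)
  twist_dual : ∀ X : C, (twist (Xᘁ)).hom = ((twist X).hom)ᘁ

/-- A (two-sided) tensor ideal. -/
structure TensorIdeal where
  mem : C → Prop
  tensor_mem_right : ∀ {X : C}, mem X → ∀ V : C, mem (X ⊗ V)
  tensor_mem_left : ∀ {X : C}, mem X → ∀ V : C, mem (V ⊗ X)
  retract_mem : ∀ {X Y : C}, mem Y → ∀ (i : X ⟶ Y) (r : Y ⟶ X), i ≫ r = 𝟙 X → mem X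

/-- A modified trace on a tensor ideal `I`: a family of linear maps
`End(X) → k` for `X ∈ I`, cyclic and satisfying the right partial trace
property. -/
structure ModifiedTrace (P : PivotalData C) (I : TensorIdeal C) where
  t : ∀ (X : C), I.mem X → (X ⟶ X) → k
  t_add : ∀ (X : C) (hX : I.mem X) (f g : X ⟶ X), t X hX (f + g) = t X hX f + t X hX g
  t_smul : ∀ (X : C) (hX : I.mem X) (c : k) (f : X ⟶ X), t X hX (c • f) = c • t X hX f
  cyclic : ∀ {X Y : C} (hX : I.mem X) (hY : I.mem Y) (f : X ⟶ Y) (g : Y ⟶ X),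
    t X hX (f ≫ g) = t Y hY (g ≫ f)
  partial_trace : ∀ (X : C) (hX : I.mem X) (V : C) (f : X ⊗ V ⟶ X ⊗ V),
    t (X ⊗ V) (I.tensor_mem_right hX V) f =
      t X hX ((ρ_ X).inv ≫ (X ◁ η_ V (Vᘁ)) ≫ (α_ X V (Vᘁ)).inv ≫ (f ▷ (Vᘁ)) ≫
        (α_ X V (Vᘁ)).hom ≫ (X ◁ P.evR V) ≫ (ρ_ X).hom)

variable {k C}

/-- Closing up a morphism `𝟙 ⟶ X ⊗ X^*` into an endomorphism of `X` using the
evaluation; this is the cutting presentation of the closed graph along the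
`X`-coloured edge. -/
def closeUp (X : C) (f : 𝟙_ C ⟶ X ⊗ Xᘁ) : X ⟶ X :=
  (λ_ X).inv ≫ (f ▷ X) ≫ (α_ X (Xᘁ) X).hom ≫ (X ◁ ε_ X (Xᘁ)) ≫ (ρ_ X).hom

end Defs

/-! ### Auxiliary lemmas -/

section AuxPivotal

variable {C : Type u} [Category.{v} C] [MonoidalCategory C] [RightRigidCategory C]

/-- The pivotal data exhibits `X` as a right dual of `Xᘁ`. -/
def PivotalData.pairing (P : PivotalData C) (X : C) : ExactPairing (Xᘁ) X where
  coevaluation' := P.coevR X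
  evaluation' := P.evR X
  coevaluation_evaluation' := by
    rw [← cancel_epi (ρ_ X).inv, ← cancel_mono (λ_ X).hom]
    simpa using P.zig X
  evaluation_coevaluation' := by
    rw [← cancel_epi (λ_ (Xᘁ)).inv, ← cancel_mono (ρ_ (Xᘁ)).hom]
    simpa using P.zag X

/-- Dinaturality of the pivotal coevaluation. -/
lemma PivotalData.coev_dinat (P : PivotalData C) {U V : C} (φ : U ⟶ V) :
    P.coevR U ≫ ((Uᘁ) ◁ φ) = P.coevR V ≫ ((φᘁ) ▷ V) := by
  letI pU : ExactPairing (Uᘁ) U := P.pairing U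
  letI pV : ExactPairing (Vᘁ) V := P.pairing V
  letI : HasLeftDual U := ⟨Uᘁ⟩
  letI : HasLeftDual V := ⟨Vᘁ⟩
  have hmate : (ᘁφ) = φᘁ := by
    have hdef : (ᘁφ) = (λ_ (Vᘁ)).inv ≫ (P.coevR U ▷ (Vᘁ)) ≫ (((Uᘁ) ◁ φ) ▷ (Vᘁ)) ≫
        (α_ (Uᘁ) V (Vᘁ)).hom ≫ ((Uᘁ) ◁ P.evR V) ≫ (ρ_ (Uᘁ)).hom := rfl
    rw [hdef, associator_naturality_middle_assoc, ← MonoidalCategory.whiskerLeft_comp_assoc,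
      P.evR_natural φ, MonoidalCategory.whiskerLeft_comp_assoc,
      ← associator_naturality_right_assoc, ← whisker_exchange_assoc,
      ← leftUnitor_inv_naturality_assoc, P.zag U, Category.comp_id]
  have h := coevaluation_comp_leftAdjointMate (f := φ)
  rw [hmate] at h
  exact h.symm

end AuxPivotal

section AuxRigid

variable {C : Type u} [Category.{v} C] [MonoidalCategory C] [RightRigidCategory C]
  [LeftRigidCategory C]

lemma epi_whiskerLeft' (W : C) {X Y : C} (f : X ⟶ Y) [Epi f] : Epi (W ◁ f) := by
  have h : (tensorLeft W).PreservesEpimorphisms :=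
    Functor.preservesEpimorphisms_of_adjunction (tensorLeftAdjunction (ᘁW) W)
  simpa using h.preserves (f := f)

lemma mono_whiskerLeft' (W : C) {X Y : C} (f : X ⟶ Y) [Mono f] : Mono (W ◁ f) := by
  have h : (tensorLeft W).PreservesMonomorphisms :=
    Functor.preservesMonomorphisms_of_adjunction (tensorLeftAdjunction W (Wᘁ))
  simpa using h.preserves (f := f)

lemma epi_whiskerRight' {X Y : C} (f : X ⟶ Y) [Epi f] (W : C) : Epi (f ▷ W) := by
  have h : (tensorRight W).PreservesEpimorphisms :=
    Functor.preservesEpimorphisms_of_adjunction (tensorRightAdjunction W (Wᘁ))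
  simpa using h.preserves (f := f)

lemma mono_whiskerRight' {X Y : C} (f : X ⟶ Y) [Mono f] (W : C) : Mono (f ▷ W) := by
  have h : (tensorRight W).PreservesMonomorphisms :=
    Functor.preservesMonomorphisms_of_adjunction (tensorRightAdjunction (ᘁW) W)
  simpa using h.preserves (f := f)

/-- The right adjoint mate of a monomorphism is an epimorphism. -/
lemma epi_rightAdjointMate {X Y : C} (f : X ⟶ Y) [Mono f] : Epi (rightAdjointMate f) := by
  constructor
  intro Z u v huv
  have key : ∀ w : Xᘁ ⟶ Z,
      (ρ_ (Xᘁ)).inv ≫ ((Xᘁ) ◁ (η_ X (Xᘁ) ≫ (X ◁ w))) ≫ (α_ (Xᘁ) X Z).inv ≫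
        (ε_ X (Xᘁ) ▷ Z) ≫ (λ_ Z).hom = w := by
    intro w
    rw [MonoidalCategory.whiskerLeft_comp_assoc, associator_inv_naturality_right_assoc,
      whisker_exchange_assoc, MonoidalCategory.leftUnitor_naturality,
      ExactPairing.coevaluation_evaluation_assoc]
    simp
  have h2 : η_ X (Xᘁ) ≫ (X ◁ u) = η_ X (Xᘁ) ≫ (X ◁ v) := by
    have hmono : Mono (f ▷ Z) := mono_whiskerRight' f Z
    rw [← cancel_mono (f ▷ Z)]
    calc (η_ X (Xᘁ) ≫ (X ◁ u)) ≫ (f ▷ Z)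
        = η_ X (Xᘁ) ≫ (f ▷ (Xᘁ)) ≫ (Y ◁ u) := by
          rw [Category.assoc, whisker_exchange]
      _ = η_ Y (Yᘁ) ≫ ((Y ◁ (rightAdjointMate f)) ≫ (Y ◁ u)) := by
          rw [← coevaluation_comp_rightAdjointMate_assoc]
      _ = η_ Y (Yᘁ) ≫ ((Y ◁ (rightAdjointMate f)) ≫ (Y ◁ v)) := by
          rw [← MonoidalCategory.whiskerLeft_comp, huv, MonoidalCategory.whiskerLeft_comp]
      _ = η_ X (Xᘁ) ≫ (f ▷ (Xᘁ)) ≫ (Y ◁ v) := by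
          rw [← coevaluation_comp_rightAdjointMate_assoc]
      _ = (η_ X (Xᘁ) ≫ (X ◁ v)) ≫ (f ▷ Z) := by
          rw [Category.assoc, whisker_exchange]
  calc u = (ρ_ (Xᘁ)).inv ≫ ((Xᘁ) ◁ (η_ X (Xᘁ) ≫ (X ◁ u))) ≫ (α_ (Xᘁ) X Z).inv ≫
        (ε_ X (Xᘁ) ▷ Z) ≫ (λ_ Z).hom := (key u).symm
    _ = (ρ_ (Xᘁ)).inv ≫ ((Xᘁ) ◁ (η_ X (Xᘁ) ≫ (X ◁ v))) ≫ (α_ (Xᘁ) X Z).inv ≫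
        (ε_ X (Xᘁ) ▷ Z) ≫ (λ_ Z).hom := by rw [h2]
    _ = v := key v

end AuxRigid

section AuxAdd

variable {C : Type u} [Category.{v} C] [Preadditive C] [MonoidalCategory C]
  [MonoidalPreadditive C] [RightRigidCategory C]

lemma rightAdjointMate_zero {X Y : C} : ((0 : X ⟶ Y)ᘁ) = 0 := by
  simp [rightAdjointMate]

lemma closeUp_add (X : C) (a b : 𝟙_ C ⟶ X ⊗ Xᘁ) :
    closeUp X (a + b) = closeUp X a + closeUp X b := by
  simp [closeUp, Preadditive.add_comp, Preadditive.comp_add]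

end AuxAdd

/-- let `C` be a ribbon finite tensor category, `I` a tensor ideal
with modified trace `t`, and `L^B_X` a closed `C`-coloured ribbon graph with a
knot component coloured by `B` and a distinct edge coloured by `X ∈ I`.  The
knot component coloured by `B` determines a family `η_B : B^* ⊗ B ⟶ X ⊗ X^*`,
dinatural in `B`, and the renormalised invariant is
`F'_t(L^B_X) = t_X` of the closure of `coev^R_B ≫ η_B`.  Then for any short
exact sequence `0 → A → B → C' → 0` in `C`,
`F'_t(L^B_X) = F'_t(L^A_X) + F'_t(L^{C'}_X)`; consequently `F'_t(L^B_X)`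
depends on `B` only through its class in the Grothendieck group. -/
theorem renormalised_invariant_additive_over_ses
    (k : Type u) [Field k] [IsAlgClosed k]
    (C : Type u) [Category.{v} C] [Abelian C] [Linear k C]
    [MonoidalCategory C] [MonoidalPreadditive C] [MonoidalLinear k C]
    [RigidCategory C] [BraidedCategory C] [Simple (𝟙_ C)]
    [EnoughProjectives C] [∀ X Y : C, FiniteDimensional k (X ⟶ Y)]
    (P : PivotalData C) (R : RibbonStructure C)
    (I : TensorIdeal C) (t : ModifiedTrace k C P I)
    (X : C) (hX : I.mem X)
    (η : ∀ B : C, (Bᘁ) ⊗ B ⟶ X ⊗ Xᘁ)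
    (hdinat : ∀ {A B : C} (φ : A ⟶ B), ((Bᘁ) ◁ φ) ≫ η B = ((rightAdjointMate φ) ▷ A) ≫ η A)
    (S : ShortComplex C) (hS : S.ShortExact) :
    t.t X hX (closeUp X (P.coevR S.X₂ ≫ η S.X₂)) =
      t.t X hX (closeUp X (P.coevR S.X₁ ≫ η S.X₁)) +
        t.t X hX (closeUp X (P.coevR S.X₃ ≫ η S.X₃)) := by
  haveI := hS.mono_f
  haveI := hS.epi_g
  -- the key morphism-level identity
  have key : P.coevR S.X₂ ≫ η S.X₂ =
      P.coevR S.X₁ ≫ η S.X₁ + P.coevR S.X₃ ≫ η S.X₃ := by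
    -- the short complex tensored with `S.X₂ᘁ` on the left is still short exact
    haveI : PreservesFiniteLimits (tensorLeft ((S.X₂)ᘁ)) := by
      haveI := (tensorLeftAdjunction ((S.X₂)ᘁ) (((S.X₂)ᘁ)ᘁ)).rightAdjoint_preservesLimits
      exact PreservesLimitsOfSize.preservesFiniteLimits.{v, u} _
    haveI : PreservesFiniteColimits (tensorLeft ((S.X₂)ᘁ)) := by
      haveI := (tensorLeftAdjunction (S.X₂) ((S.X₂)ᘁ)).leftAdjoint_preservesColimits
      exact PreservesColimitsOfSize.preservesFiniteColimits.{v, u} _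
    have hS' : (S.map (tensorLeft ((S.X₂)ᘁ))).ShortExact :=
      hS.map_of_exact (tensorLeft ((S.X₂)ᘁ))
    haveI := hS'.mono_f
    -- epi and mono instances
    haveI : Epi (rightAdjointMate S.f) := epi_rightAdjointMate S.f
    haveI hE1 : Epi ((rightAdjointMate S.f) ▷ S.X₁) := epi_whiskerRight' (rightAdjointMate S.f) S.X₁
    haveI hE2 : Epi (((S.X₃)ᘁ) ◁ S.g) := epi_whiskerLeft' ((S.X₃)ᘁ) S.g
    haveI hM1 : Mono (((S.X₁)ᘁ) ◁ S.f) := mono_whiskerLeft' ((S.X₁)ᘁ) S.f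
    -- cancel a projective cover of the unit
    have hπ : Epi (Projective.π (𝟙_ C)) := inferInstance
    set Q := Projective.over (𝟙_ C) with hQ
    set π : Q ⟶ 𝟙_ C := Projective.π (𝟙_ C) with hπdef
    rw [← cancel_epi π]
    -- lift the coevaluations of `S.X₁` and `S.X₃`
    obtain ⟨m, hm⟩ : ∃ m : Q ⟶ ((S.X₃)ᘁ) ⊗ S.X₂,
        m ≫ (((S.X₃)ᘁ) ◁ S.g) = π ≫ P.coevR S.X₃ :=
      ⟨Projective.factorThru _ _, Projective.factorThru_comp _ _⟩
    obtain ⟨l0, hl0⟩ : ∃ l0 : Q ⟶ ((S.X₂)ᘁ) ⊗ S.X₁,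
        l0 ≫ ((rightAdjointMate S.f) ▷ S.X₁) = π ≫ P.coevR S.X₁ :=
      ⟨Projective.factorThru _ _, Projective.factorThru_comp _ _⟩
    -- the defect
    set δ : Q ⟶ ((S.X₂)ᘁ) ⊗ S.X₂ :=
      π ≫ P.coevR S.X₂ - l0 ≫ (((S.X₂)ᘁ) ◁ S.f) - m ≫ ((rightAdjointMate S.g) ▷ S.X₂) with hδdef
    have t1 : (π ≫ P.coevR S.X₂) ≫ (((S.X₂)ᘁ) ◁ S.g) =
        π ≫ P.coevR S.X₃ ≫ ((rightAdjointMate S.g) ▷ S.X₃) := by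
      rw [Category.assoc, P.coev_dinat S.g]
    have t2 : (l0 ≫ (((S.X₂)ᘁ) ◁ S.f)) ≫ (((S.X₂)ᘁ) ◁ S.g) = 0 := by
      rw [Category.assoc, ← MonoidalCategory.whiskerLeft_comp, S.zero]
      simp
    have t3 : (m ≫ ((rightAdjointMate S.g) ▷ S.X₂)) ≫ (((S.X₂)ᘁ) ◁ S.g) =
        π ≫ P.coevR S.X₃ ≫ ((rightAdjointMate S.g) ▷ S.X₃) := by
      rw [Category.assoc, ← whisker_exchange, ← Category.assoc, hm, Category.assoc]
    have hδg : δ ≫ (((S.X₂)ᘁ) ◁ S.g) = 0 := by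
      rw [hδdef]
      rw [Preadditive.sub_comp, Preadditive.sub_comp, t1, t2, t3]
      simp
    -- factor the defect through the kernel
    obtain ⟨e1, he1⟩ : ∃ e1 : Q ⟶ ((S.X₂)ᘁ) ⊗ S.X₁, e1 ≫ (((S.X₂)ᘁ) ◁ S.f) = δ :=
      hS'.exact.lift' (A := Q) δ hδg
    -- the defect dies when pushed towards `S.X₁`
    have u1 : (π ≫ P.coevR S.X₂) ≫ ((rightAdjointMate S.f) ▷ S.X₂) =
        (π ≫ P.coevR S.X₁) ≫ (((S.X₁)ᘁ) ◁ S.f) := by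
      rw [Category.assoc, ← P.coev_dinat S.f, Category.assoc]
    have u2 : (l0 ≫ (((S.X₂)ᘁ) ◁ S.f)) ≫ ((rightAdjointMate S.f) ▷ S.X₂) =
        (π ≫ P.coevR S.X₁) ≫ (((S.X₁)ᘁ) ◁ S.f) := by
      rw [Category.assoc, whisker_exchange, ← Category.assoc, hl0]
    have u3 : (m ≫ ((rightAdjointMate S.g) ▷ S.X₂)) ≫ ((rightAdjointMate S.f) ▷ S.X₂) = 0 := by
      rw [Category.assoc, ← comp_whiskerRight, ← comp_rightAdjointMate, S.zero,
        rightAdjointMate_zero]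
      simp
    have hδf : δ ≫ ((rightAdjointMate S.f) ▷ S.X₂) = 0 := by
      rw [hδdef, Preadditive.sub_comp, Preadditive.sub_comp, u1, u2, u3]
      simp
    have he1f : e1 ≫ ((rightAdjointMate S.f) ▷ S.X₁) = 0 := by
      rw [← cancel_mono (((S.X₁)ᘁ) ◁ S.f), Category.assoc, ← whisker_exchange,
        ← Category.assoc, he1, hδf, Limits.zero_comp]
    -- reassemble
    have hsum : π ≫ P.coevR S.X₂ =
        (l0 + e1) ≫ (((S.X₂)ᘁ) ◁ S.f) + m ≫ ((rightAdjointMate S.g) ▷ S.X₂) := by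
      rw [Preadditive.add_comp, he1, hδdef]
      abel
    have hl : (l0 + e1) ≫ ((rightAdjointMate S.f) ▷ S.X₁) = π ≫ P.coevR S.X₁ := by
      rw [Preadditive.add_comp, hl0, he1f, add_zero]
    calc π ≫ (P.coevR S.X₂ ≫ η S.X₂) = (π ≫ P.coevR S.X₂) ≫ η S.X₂ := by
          rw [Category.assoc]
      _ = ((l0 + e1) ≫ (((S.X₂)ᘁ) ◁ S.f) + m ≫ ((rightAdjointMate S.g) ▷ S.X₂)) ≫ η S.X₂ := by
          rw [hsum]
      _ = (l0 + e1) ≫ ((((S.X₂)ᘁ) ◁ S.f) ≫ η S.X₂) +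
            m ≫ (((rightAdjointMate S.g) ▷ S.X₂) ≫ η S.X₂) := by
          simp [Preadditive.add_comp, Category.assoc]
      _ = (l0 + e1) ≫ (((rightAdjointMate S.f) ▷ S.X₁) ≫ η S.X₁) +
            m ≫ ((((S.X₃)ᘁ) ◁ S.g) ≫ η S.X₃) := by
          rw [hdinat S.f, ← hdinat S.g]
      _ = ((l0 + e1) ≫ ((rightAdjointMate S.f) ▷ S.X₁)) ≫ η S.X₁ +
            (m ≫ (((S.X₃)ᘁ) ◁ S.g)) ≫ η S.X₃ := by
          simp [Category.assoc]
      _ = (π ≫ P.coevR S.X₁) ≫ η S.X₁ + (π ≫ P.coevR S.X₃) ≫ η S.X₃ := by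
          rw [hl, hm]
      _ = π ≫ (P.coevR S.X₁ ≫ η S.X₁ + P.coevR S.X₃ ≫ η S.X₃) := by
          simp [Preadditive.comp_add, Category.assoc]
  rw [key, closeUp_add, t.t_add]
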